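/- arXiv:1709.01155 — 6 statements merged into one kernel-verified Lean document; each statement's English description precedes it below -/
import Mathlib

section
/- Let F be the free group on generators a, b, and consider G = F × Z with Z generated by t. Let H = ⟨a, b⟩ and K = ⟨ta, b⟩ be subgroups of G. Then H ∩ K equals the set of elements w(a,b) ∈ F with total a-exponent zero, which is the normal closure of b in F, and this subgroup is not finitely generated. -/
/-- The free group on two generators `a = of 0`, `b = of 1`. -/
abbrev F2 : Type := FreeGroup (Fin 2)

abbrev a : F2 := FreeGroup.of 0
abbrev b : F2 := FreeGroup.of 1

/-- `G = F₂ × ℤ` (with `ℤ` written multiplicatively, generated by `t`). -/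
abbrev G0 : Type := F2 × Multiplicative ℤ

abbrev t : Multiplicative ℤ := Multiplicative.ofAdd 1

/-- The total `a`-exponent homomorphism `F₂ → ℤ`. -/
noncomputable def expA : F2 →* Multiplicative ℤ :=
  FreeGroup.lift (fun i => if i = 0 then Multiplicative.ofAdd (1 : ℤ) else 1)

/-! ### Auxiliary definitions: the lamplighter group `(ℤ →₀ ℤ) ⋊ ℤ` -/

/-- The base group of the lamplighter group, written multiplicatively. -/
abbrev LB : Type := Multiplicative (ℤ →₀ ℤ)

/-- The shift action of `ℤ` on `ℤ →₀ ℤ`. -/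
noncomputable def shiftHom : Multiplicative ℤ →* MulAut LB where
  toFun m := AddEquiv.toMultiplicative
    (Finsupp.domCongr (Equiv.addRight (Multiplicative.toAdd m)) : (ℤ →₀ ℤ) ≃+ (ℤ →₀ ℤ))
  map_one' := by
    ext f
    refine Multiplicative.toAdd.injective ?_
    rename_i x
    show (Finsupp.equivMapDomain _ _) x = _
    rw [Finsupp.equivMapDomain_apply]
    norm_num
    rfl
  map_mul' := by
    intro m n
    ext f
    refine Multiplicative.toAdd.injective ?_
    rename_i x
    show (Finsupp.equivMapDomain _ _) x = (Finsupp.equivMapDomain _ (Finsupp.equivMapDomain _ _)) x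
    rw [Finsupp.equivMapDomain_apply, Finsupp.equivMapDomain_apply, Finsupp.equivMapDomain_apply]
    congr 1
    simp [Equiv.Perm.mul_def]; ring

lemma shiftHom_single (n k v : ℤ) :
    shiftHom (Multiplicative.ofAdd n) (Multiplicative.ofAdd (Finsupp.single k v))
      = Multiplicative.ofAdd (Finsupp.single (k + n) v) := by
  show Multiplicative.ofAdd (Finsupp.equivMapDomain _ _) = _
  congr 1
  simp only [toAdd_ofAdd]
  rw [Finsupp.equivMapDomain_single]
  rfl

/-- The lamplighter group. -/
abbrev W : Type := LB ⋊[shiftHom] Multiplicative ℤ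

/-- The lamplighter representation of `F₂`: `a` acts by shift, `b` by a lamp at `0`. -/
noncomputable def Φ : F2 →* W :=
  FreeGroup.lift (fun i => if i = 0 then SemidirectProduct.inr t
    else SemidirectProduct.inl (Multiplicative.ofAdd (Finsupp.single 0 1)))

lemma right_Φ : (SemidirectProduct.rightHom).comp Φ = expA := by
  apply FreeGroup.ext_hom
  intro i
  fin_cases i <;> simp [Φ, expA]

lemma right_Φ_apply (w : F2) : (Φ w).right = expA w := by
  have := congrFun (congrArg DFunLike.coe right_Φ) w
  simpa using this

lemma Φ_conj (n : ℤ) :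
    Φ (a ^ n * b * a ^ (-n)) = SemidirectProduct.inl
      (Multiplicative.ofAdd (Finsupp.single n 1)) := by
  have ha : Φ a = SemidirectProduct.inr t := by simp [Φ]
  have hb : Φ b = SemidirectProduct.inl (Multiplicative.ofAdd (Finsupp.single 0 1)) := by
    simp [Φ]
  have h : Φ (a ^ n * b * a ^ (-n)) =
      SemidirectProduct.inr (t ^ n) *
        SemidirectProduct.inl (Multiplicative.ofAdd (Finsupp.single 0 1)) *
        (SemidirectProduct.inr (t ^ n))⁻¹ := by
    rw [map_mul, map_mul, map_zpow, map_zpow, ha, hb, zpow_neg, map_zpow]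
  have ht : t ^ n = Multiplicative.ofAdd n := by
    rw [← ofAdd_zsmul]; norm_num
  rw [h, ← map_inv, ← SemidirectProduct.inl_aut, ht, shiftHom_single, zero_add]

/-- The "lamp configuration" of a word. -/
noncomputable def L (w : F2) : ℤ →₀ ℤ := Multiplicative.toAdd (Φ w).left

lemma LmulKey {x y : F2} (hx : expA x = 1) : L (x * y) = L x + L y := by
  unfold L
  rw [map_mul, SemidirectProduct.mul_left, right_Φ_apply, hx, map_one]
  rfl

lemma expA_a : expA a = t := by simp [expA]
lemma expA_b : expA b = 1 := by simp [expA]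

lemma notFG : ¬ (expA.ker).FG := by
  rintro ⟨S, hS⟩
  set T : Finset ℤ := S.sup fun s => (L s).support with hT
  have key : ∀ w ∈ Subgroup.closure (S : Set F2), expA w = 1 ∧ (L w).support ⊆ T := by
    intro w hw
    induction hw using Subgroup.closure_induction with
    | mem x hx =>
      constructor
      · have : x ∈ expA.ker := hS ▸ Subgroup.subset_closure hx
        exact this
      · exact Finset.le_sup (f := fun s => (L s).support) hx
    | one =>
      constructor
      · exact map_one expA
      · have : L 1 = 0 := by unfold L; rw [map_one]; rfl
        simp [this]
    | mul x y hx hy ihx ihy =>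
      refine ⟨by rw [map_mul, ihx.1, ihy.1, one_mul], ?_⟩
      rw [LmulKey ihx.1]
      exact (Finsupp.support_add).trans (Finset.union_subset ihx.2 ihy.2)
    | inv x hx ihx =>
      refine ⟨by rw [map_inv, ihx.1, inv_one], ?_⟩
      have h0 : L (x * x⁻¹) = L x + L x⁻¹ := LmulKey ihx.1
      rw [mul_inv_cancel] at h0
      have h1 : L 1 = 0 := by unfold L; rw [map_one]; rfl
      rw [h1] at h0
      have hinv : L x⁻¹ = - L x := by
        have := congrArg (fun z => -L x + z) h0
        simpa [add_assoc] using this.symm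
      rw [hinv, Finsupp.support_neg]
      exact ihx.2
  obtain ⟨n, hn⟩ := Infinite.exists_notMem_finset T
  have hbn : a ^ n * b * a ^ (-n) ∈ expA.ker := by
    have : expA b = 1 := by simp [expA]
    simp [MonoidHom.mem_ker, map_mul, map_zpow, this, mul_assoc, ← zpow_add]
  rw [← hS] at hbn
  have hsub := (key _ hbn).2
  have hL : L (a ^ n * b * a ^ (-n)) = Finsupp.single n 1 := by
    unfold L; rw [Φ_conj]; rfl
  rw [hL] at hsub
  exact hn (hsub (by simp))

lemma ker_eq : expA.ker = Subgroup.normalClosure {b} := by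
  apply le_antisymm
  · intro x hx
    set N := Subgroup.normalClosure ({b} : Set F2) with hN
    haveI : N.Normal := Subgroup.normalClosure_normal
    set σ : Multiplicative ℤ →* F2 ⧸ N := zpowersHom _ ((QuotientGroup.mk' N) a) with hσ
    have hfac : (QuotientGroup.mk' N) = σ.comp expA := by
      apply FreeGroup.ext_hom; intro i; fin_cases i
      · show QuotientGroup.mk' N a = σ (expA a)
        rw [expA_a, hσ, zpowersHom_apply]
        simp
      · show QuotientGroup.mk' N b = σ (expA b)
        rw [expA_b, map_one]
        exact (QuotientGroup.eq_one_iff b).mpr (Subgroup.subset_normalClosure rfl)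
    have h1 : QuotientGroup.mk' N x = 1 := by
      rw [hfac]
      show σ (expA x) = 1
      rw [MonoidHom.mem_ker.mp hx, map_one]
    exact (QuotientGroup.eq_one_iff x).mp h1
  · apply Subgroup.normalClosure_le_normal
    intro x hx
    rw [Set.mem_singleton_iff] at hx
    subst hx
    exact expA_b

lemma closure_ab : Subgroup.closure ({a, b} : Set F2) = ⊤ := by
  have h : ({a, b} : Set F2) = Set.range (FreeGroup.of) := by
    ext x
    constructor
    · rintro (rfl | rfl)
      exacts [⟨0, rfl⟩, ⟨1, rfl⟩]
    · rintro ⟨i, rfl⟩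
      fin_cases i
      · exact Or.inl rfl
      · exact Or.inr rfl
  rw [h, FreeGroup.closure_range_of]

noncomputable def ψ : F2 →* G0 := (MonoidHom.id F2).prod expA

lemma part1 : Subgroup.closure {((a:F2), (1:Multiplicative ℤ)), (b, 1)} ⊓
    Subgroup.closure {((a:F2), t), (b, 1)} =
    Subgroup.map (MonoidHom.inl F2 (Multiplicative ℤ)) expA.ker := by
  have hH : Subgroup.closure {((a:F2), (1:Multiplicative ℤ)), (b, 1)} =
      (MonoidHom.inl F2 (Multiplicative ℤ)).range := by
    rw [MonoidHom.range_eq_map, ← closure_ab, MonoidHom.map_closure]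
    congr 1
    simp [Set.image_insert_eq]
  have hK : Subgroup.closure {((a:F2), t), (b, 1)} = ψ.range := by
    rw [MonoidHom.range_eq_map, ← closure_ab, MonoidHom.map_closure]
    congr 1
    simp [Set.image_insert_eq, ψ, expA_a, expA_b]
  rw [hH, hK]
  ext ⟨w, z⟩
  simp only [Subgroup.mem_inf, MonoidHom.mem_range, Subgroup.mem_map, Prod.ext_iff,
    MonoidHom.inl_apply, MonoidHom.mem_ker, ψ, MonoidHom.prod_apply, MonoidHom.id_apply]
  constructor
  · rintro ⟨⟨u, hu1, hu2⟩, ⟨v, hv1, hv2⟩⟩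
    subst hv1
    exact ⟨v, by rw [hv2, ← hu2], rfl, hu2⟩
  · rintro ⟨u, hu, rfl, rfl⟩
    exact ⟨⟨u, rfl, rfl⟩, ⟨u, rfl, hu⟩⟩

theorem stmt0 :
    let H : Subgroup G0 := Subgroup.closure {(a, 1), (b, 1)}
    let K : Subgroup G0 := Subgroup.closure {(a, t), (b, 1)}
    H ⊓ K = Subgroup.map (MonoidHom.inl F2 (Multiplicative ℤ)) expA.ker ∧
      expA.ker = Subgroup.normalClosure {b} ∧ ¬ (H ⊓ K).FG := by
  intro H K
  have h1 : H ⊓ K = Subgroup.map (MonoidHom.inl F2 (Multiplicative ℤ)) expA.ker := part1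
  refine ⟨h1, ker_eq, ?_⟩
  rintro ⟨S, hS⟩
  apply notFG
  refine ⟨S.image (MonoidHom.fst F2 (Multiplicative ℤ)), ?_⟩
  have : Subgroup.map (MonoidHom.fst F2 (Multiplicative ℤ)) (H ⊓ K) = expA.ker := by
    rw [h1, Subgroup.map_map]
    rw [MonoidHom.fst_comp_inl, Subgroup.map_id]
  rw [← this, ← hS, MonoidHom.map_closure]
  congr 1
  simp [Finset.coe_image]
end

section
/- Let G = Z^m × G₀ where G₀ is a group, and let H ≤ G be a subgroup such that the projection Hπ ≤ G₀ (where π : G → G₀ is the natural projection) admits a presentation with generating set Y and relations consisting only of commutators of pairs of generators. Then the restriction of π to H splits: there is a section σ : Hπ → H of π, and H decomposes as the internal direct product H = (Z^m ∩ H) × (Hπ)σ. -/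
open scoped commutatorElement

/-- Let `G = ℤ^m × G₀` and `H ≤ G` be a subgroup such that the projection `Hπ`
admits a presentation all of whose relations are commutators of pairs of generators
(i.e. `Hπ` is a partially commutative group).  Then `π` restricted to `H` splits:
there is a section `σ : Hπ → H` of `π`, and `H` is the internal direct product
`(ℤ^m ∩ H) × (Hπ)σ` (every element of `H` factors uniquely). -/
theorem stmt4 {m : ℕ} {G₀ : Type*} [Group G₀]
    (H : Subgroup (Multiplicative (Fin m → ℤ) × G₀))
    (hpc : ∃ (Y : Type) (R : Set (FreeGroup Y)),
      (∀ r ∈ R, ∃ y z : Y, r = ⁅FreeGroup.of y, FreeGroup.of z⁆) ∧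
      Nonempty (PresentedGroup R ≃*
        (H.map (MonoidHom.snd (Multiplicative (Fin m → ℤ)) G₀)))) :
    ∃ σ : (H.map (MonoidHom.snd (Multiplicative (Fin m → ℤ)) G₀)) →*
        (Multiplicative (Fin m → ℤ) × G₀),
      (∀ y, σ y ∈ H) ∧
      (∀ y, (σ y).2 = (y : G₀)) ∧
      (∀ h ∈ H, ∃! zy : ↥(H ⊓ (MonoidHom.snd (Multiplicative (Fin m → ℤ)) G₀).ker) ×
          ↥(H.map (MonoidHom.snd (Multiplicative (Fin m → ℤ)) G₀)),
        ((zy.1 : Multiplicative (Fin m → ℤ) × G₀)) * σ zy.2 = h) := by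
  obtain ⟨Y, R, hR, ⟨e⟩⟩ := hpc
  set Hπ := H.map (MonoidHom.snd (Multiplicative (Fin m → ℤ)) G₀) with hHπ
  -- choose preimages in H of the generators
  have hexists : ∀ y : Y, ∃ g : Multiplicative (Fin m → ℤ) × G₀,
      g ∈ H ∧ g.2 = (e (PresentedGroup.of y) : G₀) := by
    intro y
    obtain ⟨g, hg, hg2⟩ := (e (PresentedGroup.of y)).2
    exact ⟨g, hg, hg2⟩
  choose f hfH hf2 using hexists
  -- the relations are killed by f
  have hrel : ∀ r ∈ R, FreeGroup.lift f r = 1 := by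
    intro r hr
    obtain ⟨y, z, rfl⟩ := hR r hr
    have h1 : PresentedGroup.mk R ⁅FreeGroup.of y, FreeGroup.of z⁆ = 1 := by
      have : (⁅FreeGroup.of y, FreeGroup.of z⁆ : FreeGroup Y) ∈
          Subgroup.normalClosure R := Subgroup.subset_normalClosure hr
      exact (QuotientGroup.eq_one_iff _).mpr this
    have h2 : ⁅e (PresentedGroup.of y), e (PresentedGroup.of z)⁆ = 1 := by
      have h1' : (⁅PresentedGroup.of (rels := R) y, PresentedGroup.of (rels := R) z⁆
          : PresentedGroup R) = 1 := by rw [map_commutatorElement] at h1; exact h1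
      rw [← map_commutatorElement, h1', map_one]
    have h2' : ⁅(f y).2, (f z).2⁆ = 1 := by
      rw [hf2 y, hf2 z]
      exact congrArg Subtype.val h2
    have : FreeGroup.lift f ⁅FreeGroup.of y, FreeGroup.of z⁆ = ⁅f y, f z⁆ := by
      simp [commutatorElement_def]
    rw [this]
    have h1' : ⁅(f y).1, (f z).1⁆ = 1 := commutatorElement_eq_one_iff_commute.mpr
      (Commute.all _ _)
    rw [commutatorElement_def] at h1' h2' ⊢
    exact Prod.ext h1' h2'
  let φ : PresentedGroup R →* Multiplicative (Fin m → ℤ) × G₀ :=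
    PresentedGroup.toGroup hrel
  let σ : Hπ →* Multiplicative (Fin m → ℤ) × G₀ := φ.comp e.symm.toMonoidHom
  -- σ lands in H
  have hφH : ∀ x : PresentedGroup R, φ x ∈ H := by
    intro x
    have : x ∈ Subgroup.closure (Set.range (PresentedGroup.of : Y → PresentedGroup R)) := by
      rw [PresentedGroup.closure_range_of]; trivial
    refine Subgroup.closure_induction ?_ ?_ ?_ ?_ this
    · rintro _ ⟨y, rfl⟩
      simpa [φ, PresentedGroup.toGroup.of] using hfH y
    · simpa using H.one_mem
    · intro a b _ _ ha hb; rw [map_mul]; exact H.mul_mem ha hb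
    · intro a _ ha; rw [map_inv]; exact H.inv_mem ha
  have hσH : ∀ y : Hπ, σ y ∈ H := fun y => hφH _
  -- π ∘ σ = id
  have hsnd : ∀ y : Hπ, (σ y).2 = (y : G₀) := by
    have key : (MonoidHom.snd (Multiplicative (Fin m → ℤ)) G₀).comp φ
        = Hπ.subtype.comp e.toMonoidHom := by
      ext y
      simp [φ, PresentedGroup.toGroup.of, hf2 y]
    intro y
    have := congrArg (fun ψ => ψ (e.symm y)) key
    simpa [σ] using this
  refine ⟨σ, hσH, hsnd, ?_⟩
  intro h hh
  set y : Hπ := ⟨h.2, h, hh, rfl⟩ with hy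
  have hzH : h * (σ y)⁻¹ ∈ H := H.mul_mem hh (H.inv_mem (hσH y))
  have hzker : h * (σ y)⁻¹ ∈ (MonoidHom.snd (Multiplicative (Fin m → ℤ)) G₀).ker := by
    rw [MonoidHom.mem_ker]
    have : (MonoidHom.snd (Multiplicative (Fin m → ℤ)) G₀) (h * (σ y)⁻¹)
        = h.2 * ((σ y).2)⁻¹ := rfl
    rw [this, hsnd y]
    simp [hy]
  refine ⟨⟨⟨h * (σ y)⁻¹, hzH, hzker⟩, y⟩, by simp, ?_⟩
  rintro ⟨z', y'⟩ hzy
  have hy' : y' = y := by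
    apply Subtype.ext
    have h2 : ((z' : Multiplicative (Fin m → ℤ) × G₀) * σ y').2 = h.2 := by rw [hzy]
    have hz2 : (z' : Multiplicative (Fin m → ℤ) × G₀).2 = 1 := z'.2.2
    have : (z' : Multiplicative (Fin m → ℤ) × G₀).2 * (σ y').2 = h.2 := h2
    rw [hz2, one_mul, hsnd y'] at this
    simpa [hy] using this
  subst hy'
  have : (z' : Multiplicative (Fin m → ℤ) × G₀) = h * (σ y)⁻¹ := by
    rw [← hzy]; group
  simp [Prod.mk.injEq, Subtype.ext_iff, this]
end

section
/- Let G = Z^m × G₀ with projection π : G → G₀, and let H₁, H₂ ≤ G be subgroups. Then (H₁ ∩ H₂)π is a normal subgroup of H₁π ∩ H₂π. -/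
/-- Key: conjugation only depends on second component when first factor is abelian. -/
lemma conj_eq_of_snd_eq {m : ℕ} {G₀ : Type*} [Group G₀]
    (p q k : Multiplicative (Fin m → ℤ) × G₀) (h : p.2 = q.2) :
    p * k * p⁻¹ = q * k * q⁻¹ := by
  apply Prod.ext
  · simp [mul_comm, mul_assoc, mul_left_comm]
  · simp [h]

/-- For `G = ℤ^m × G₀` with projection `π` and subgroups `H₁, H₂ ≤ G`,
the image `(H₁ ∩ H₂)π` is a normal subgroup of `H₁π ∩ H₂π`. -/
theorem stmt6 {m : ℕ} {G₀ : Type*} [Group G₀]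
    (H₁ H₂ : Subgroup (Multiplicative (Fin m → ℤ) × G₀)) :
    (((H₁ ⊓ H₂).map (MonoidHom.snd (Multiplicative (Fin m → ℤ)) G₀)).subgroupOf
      (H₁.map (MonoidHom.snd (Multiplicative (Fin m → ℤ)) G₀) ⊓
        H₂.map (MonoidHom.snd (Multiplicative (Fin m → ℤ)) G₀))).Normal := by
  constructor
  intro x hx g
  rw [Subgroup.mem_subgroupOf] at hx ⊢
  obtain ⟨k, hk, hkx⟩ := hx
  obtain ⟨⟨h₁, hh₁, hg₁⟩, ⟨h₂, hh₂, hg₂⟩⟩ := g.2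
  refine ⟨h₁ * k * h₁⁻¹, ⟨?_, ?_⟩, ?_⟩
  · exact H₁.mul_mem (H₁.mul_mem hh₁ hk.1) (H₁.inv_mem hh₁)
  · rw [conj_eq_of_snd_eq h₁ h₂ k (hg₁.trans hg₂.symm)]
    exact H₂.mul_mem (H₂.mul_mem hh₂ hk.2) (H₂.inv_mem hh₂)
  · simp only [MonoidHom.coe_snd] at hg₁ hkx ⊢
    simp [hg₁, hkx]
end

section
/- Let G = Z^m × G₀ with projection π : G → G₀, and let H₁, H₂ ≤ G be subgroups. Then the commutator subgroup [H₁π ∩ H₂π, H₁π ∩ H₂π] is contained in (H₁ ∩ H₂)π. -/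
open commutatorElement in
/-- For `G = ℤ^m × G₀` with projection `π` and subgroups `H₁, H₂ ≤ G`,
the commutator subgroup `[H₁π ∩ H₂π, H₁π ∩ H₂π]` is contained in `(H₁ ∩ H₂)π`. -/
theorem stmt7 {m : ℕ} {G₀ : Type*} [Group G₀]
    (H₁ H₂ : Subgroup (Multiplicative (Fin m → ℤ) × G₀)) :
    ⁅H₁.map (MonoidHom.snd (Multiplicative (Fin m → ℤ)) G₀) ⊓
        H₂.map (MonoidHom.snd (Multiplicative (Fin m → ℤ)) G₀),
      H₁.map (MonoidHom.snd (Multiplicative (Fin m → ℤ)) G₀) ⊓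
        H₂.map (MonoidHom.snd (Multiplicative (Fin m → ℤ)) G₀)⁆ ≤
      (H₁ ⊓ H₂).map (MonoidHom.snd (Multiplicative (Fin m → ℤ)) G₀) := by
  rw [Subgroup.commutator_le]
  rintro g ⟨⟨⟨a, g'⟩, ha, rfl⟩, ⟨⟨a', g''⟩, ha', hg''⟩⟩
      h ⟨⟨⟨b, h'⟩, hb, rfl⟩, ⟨⟨b', h''⟩, hb', hh''⟩⟩
  simp only [MonoidHom.coe_snd] at hg'' hh'' ⊢
  subst hg'' hh''
  refine ⟨(1, ⁅g'', h''⁆), ⟨?_, ?_⟩, rfl⟩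
  · have h1 : ⁅((a, g'') : Multiplicative (Fin m → ℤ) × G₀), (b, h'')⁆ ∈ H₁ :=
      mul_mem (mul_mem (mul_mem ha hb) (inv_mem ha)) (inv_mem hb)
    simpa [commutatorElement_def, Prod.ext_iff, mul_comm, mul_assoc] using h1
  · have h2 : ⁅((a', g'') : Multiplicative (Fin m → ℤ) × G₀), (b', h'')⁆ ∈ H₂ :=
      mul_mem (mul_mem (mul_mem ha' hb') (inv_mem ha')) (inv_mem hb')
    simpa [commutatorElement_def, Prod.ext_iff, mul_comm, mul_assoc] using h2
end

section
/- Every nonempty finite simple graph with no induced path on 4 vertices and no induced cycle on 4 vertices is either disconnected or contains a central vertex (a vertex adjacent to all other vertices). -/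
/-- `B` occurs as an induced subgraph of `A`. -/
def HasInduced {W V : Type} (B : SimpleGraph W) (A : SimpleGraph V) : Prop :=
  ∃ f : W → V, Function.Injective f ∧ ∀ i j : W, A.Adj (f i) (f j) ↔ B.Adj i j

private lemma cut_edge {V : Type} {A : SimpleGraph V} (S : Set V) :
    ∀ {a b : V}, A.Walk a b → a ∈ S → b ∉ S →
      ∃ u ∈ S, ∃ w ∉ S, A.Adj u w := by
  intro a b p
  induction p with
  | nil => intro h h'; exact absurd h h'
  | @cons x y z h p ih =>
    intro ha hb
    by_cases hy : y ∈ S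
    · exact ih hy hb
    · exact ⟨x, ha, y, hy, h⟩

/-- Droms's key lemma: every nonempty finite simple graph with no induced `P₄` and no
induced `C₄` is either disconnected or has a central vertex (adjacent to all others). -/
theorem stmt16 {V : Type} [Fintype V] [Nonempty V] (A : SimpleGraph V)
    (hP4 : ¬ HasInduced (SimpleGraph.pathGraph 4) A)
    (hC4 : ¬ HasInduced (SimpleGraph.cycleGraph 4) A) :
    ¬ A.Connected ∨ ∃ v : V, ∀ w : V, w ≠ v → A.Adj v w := by
  classical
  by_cases hconn : A.Connected
  swap
  · exact Or.inl hconn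
  right
  obtain ⟨v, -, hv⟩ := Finset.exists_max_image Finset.univ (fun x => A.degree x)
    ⟨Classical.arbitrary V, Finset.mem_univ _⟩
  refine ⟨v, ?_⟩
  by_contra hnot
  push_neg at hnot
  obtain ⟨w0, hw0ne, hw0⟩ := hnot
  set S : Set V := {x | x = v ∨ A.Adj v x} with hS
  have hw0S : w0 ∉ S := by
    intro h; rcases h with h | h
    · exact hw0ne h
    · exact hw0 h
  obtain ⟨u, huS, w, hwS, huw⟩ :=
    cut_edge S ((hconn.preconnected v w0).some) (Or.inl rfl) hw0S
  have hvw : ¬ A.Adj v w := fun h => hwS (Or.inr h)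
  have hwv : w ≠ v := fun h => hwS (Or.inl h)
  have hvu : A.Adj v u := by
    rcases huS with h | h
    · subst h; exact absurd (Or.inr huw) hwS
    · exact h
  -- find x adjacent to v, distinct from u, not adjacent to u
  have hx : ∃ x, A.Adj v x ∧ x ≠ u ∧ ¬ A.Adj u x := by
    by_contra hc
    push_neg at hc
    have hsub : insert v (insert w (A.neighborFinset v \ {u})) ⊆ A.neighborFinset u := by
      intro y hy
      simp only [Finset.mem_insert, Finset.mem_sdiff, Finset.mem_singleton,
        SimpleGraph.mem_neighborFinset] at hy ⊢
      rcases hy with rfl | rfl | ⟨hy1, hy2⟩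
      · exact hvu.symm
      · exact huw
      · exact hc y hy1 hy2
    have hcard : (insert v (insert w (A.neighborFinset v \ {u}))).card
        = A.degree v + 1 := by
      rw [Finset.card_insert_of_notMem, Finset.card_insert_of_notMem,
        Finset.card_sdiff_of_subset (by simpa using hvu)]
      · have hpos : 0 < (A.neighborFinset v).card :=
          Finset.card_pos.mpr ⟨u, by simpa using hvu⟩
        simp only [Finset.card_singleton, SimpleGraph.card_neighborFinset_eq_degree] at hpos ⊢
        omega
      · simp only [Finset.mem_sdiff, SimpleGraph.mem_neighborFinset]
        exact fun h => hvw h.1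
      · simp only [Finset.mem_insert, Finset.mem_sdiff, SimpleGraph.mem_neighborFinset]
        rintro (rfl | ⟨h, -⟩)
        · exact hwv rfl
        · exact A.irrefl h
    have h1 := Finset.card_le_card hsub
    rw [hcard, SimpleGraph.card_neighborFinset_eq_degree] at h1
    have h2 := hv u (Finset.mem_univ u)
    omega
  obtain ⟨x, hvx, hxu, hux⟩ := hx
  have hxv : x ≠ v := fun h => A.irrefl (h ▸ hvx)
  have hxw : x ≠ w := fun h => hvw (h ▸ hvx)
  have hvune : v ≠ u := hvu.ne
  have huwne : u ≠ w := huw.ne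
  have hvwne : v ≠ w := fun h => hwv h.symm
  have hwvadj : ¬ A.Adj w v := fun h => hvw h.symm
  have hxuadj : ¬ A.Adj x u := fun h => hux h.symm
  by_cases hxwadj : A.Adj x w
  · -- C4 on v x w u : edges v-x, x-w, w-u, u-v ; nonedges v-w, x-u
    apply hC4
    refine ⟨![v, x, w, u], ?_, ?_⟩
    · intro i j hij
      fin_cases i <;> fin_cases j <;> simp_all
    · intro i j
      fin_cases i <;> fin_cases j <;>
        simp [SimpleGraph.cycleGraph_adj, hvx, hvx.symm, hxwadj, hxwadj.symm,
          huw, huw.symm, hvu, hvu.symm, hvw, hwvadj, hux, hxuadj, A.irrefl] <;> decide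
  · -- P4 : x v u w
    apply hP4
    refine ⟨![x, v, u, w], ?_, ?_⟩
    · intro i j hij
      fin_cases i <;> fin_cases j <;> simp_all
    · intro i j
      have hwxadj : ¬ A.Adj w x := fun h => hxwadj h.symm
      fin_cases i <;> fin_cases j <;>
        simp [SimpleGraph.pathGraph_adj, hvx, hvx.symm, hvu, hvu.symm, huw, huw.symm,
          hvw, hwvadj, hux, hxuadj, hxwadj, hwxadj, A.irrefl] <;> decide
end

section
/- Let A be a finite simple graph that is {P₄, C₄}-free (a Droms graph). Then A belongs to the smallest family of graphs D satisfying: (1) the empty graph is in D; (2) if A₁, A₂ ∈ D then their disjoint union A₁ ⊔ A₂ ∈ D; (3) if A ∈ D then the cone K₁ * A (adding one vertex adjacent to everything) is in D. Conversely, every graph in this family is {P₄, C₄}-free. -/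
/-- The disjoint union of two simple graphs (no edges between the parts). -/
def sumGraph {V₁ V₂ : Type} (A₁ : SimpleGraph V₁) (A₂ : SimpleGraph V₂) :
    SimpleGraph (V₁ ⊕ V₂) where
  Adj x y :=
    (∃ a b, x = Sum.inl a ∧ y = Sum.inl b ∧ A₁.Adj a b) ∨
    (∃ a b, x = Sum.inr a ∧ y = Sum.inr b ∧ A₂.Adj a b)
  symm := by
    constructor
    rintro x y (⟨a, b, rfl, rfl, h⟩ | ⟨a, b, rfl, rfl, h⟩)
    · exact Or.inl ⟨b, a, rfl, rfl, h.symm⟩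
    · exact Or.inr ⟨b, a, rfl, rfl, h.symm⟩
  loopless := by
    constructor
    rintro x (⟨a, b, rfl, h1, h⟩ | ⟨a, b, rfl, h1, h⟩)
    · obtain rfl : a = b := Sum.inl.inj h1
      exact A₁.irrefl h
    · obtain rfl : a = b := Sum.inr.inj h1
      exact A₂.irrefl h

/-- The cone `K₁ * A`: one new vertex (`none`) joined to every vertex of `A`. -/
def coneGraph {V : Type} (A : SimpleGraph V) : SimpleGraph (Option V) where
  Adj x y :=
    (x = none ∧ y ≠ none) ∨ (x ≠ none ∧ y = none) ∨
    (∃ a b, x = some a ∧ y = some b ∧ A.Adj a b)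
  symm := by
    constructor
    rintro x y (⟨rfl, h⟩ | ⟨h, rfl⟩ | ⟨a, b, rfl, rfl, h⟩)
    · exact Or.inr (Or.inl ⟨h, rfl⟩)
    · exact Or.inl ⟨rfl, h⟩
    · exact Or.inr (Or.inr ⟨b, a, rfl, rfl, h.symm⟩)
  loopless := by
    constructor
    rintro x (⟨rfl, h⟩ | ⟨h, rfl⟩ | ⟨a, b, rfl, h1, h⟩)
    · exact h rfl
    · exact h rfl
    · obtain rfl : a = b := Option.some.inj h1
      exact A.irrefl h

/-- The smallest family of graphs (up to isomorphism) containing the empty graph and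
closed under disjoint unions and cones. -/
inductive DromsFam : ∀ {V : Type}, SimpleGraph V → Prop
  | empty : DromsFam (⊥ : SimpleGraph Empty)
  | union {V₁ V₂ : Type} {A₁ : SimpleGraph V₁} {A₂ : SimpleGraph V₂} :
      DromsFam A₁ → DromsFam A₂ → DromsFam (sumGraph A₁ A₂)
  | cone {V : Type} {A : SimpleGraph V} : DromsFam A → DromsFam (coneGraph A)
  | iso {V W : Type} {A : SimpleGraph V} {B : SimpleGraph W} :
      DromsFam A → Nonempty (A ≃g B) → DromsFam B

section Aux

open SimpleGraph

lemma sumGraph_adj_inl {V₁ V₂ : Type} {A₁ : SimpleGraph V₁} {A₂ : SimpleGraph V₂}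
    {a b : V₁} : (sumGraph A₁ A₂).Adj (Sum.inl a) (Sum.inl b) ↔ A₁.Adj a b := by
  simp [sumGraph]

lemma sumGraph_adj_inr {V₁ V₂ : Type} {A₁ : SimpleGraph V₁} {A₂ : SimpleGraph V₂}
    {a b : V₂} : (sumGraph A₁ A₂).Adj (Sum.inr a) (Sum.inr b) ↔ A₂.Adj a b := by
  simp [sumGraph]

lemma coneGraph_adj_some {V : Type} {A : SimpleGraph V} {a b : V} :
    (coneGraph A).Adj (some a) (some b) ↔ A.Adj a b := by
  simp [coneGraph]

lemma hasInduced_comp {W V V' : Type} {B : SimpleGraph W} {A : SimpleGraph V}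
    {A' : SimpleGraph V'} (g : V → V') (hg : Function.Injective g)
    (hadj : ∀ a b, A'.Adj (g a) (g b) ↔ A.Adj a b) :
    HasInduced B A → HasInduced B A' := by
  rintro ⟨f, hfi, hfa⟩
  exact ⟨g ∘ f, hg.comp hfi, fun i j => (hadj _ _).trans (hfa i j)⟩

lemma not_hasInduced_sum {H : SimpleGraph (Fin 4)}
    (h01 : H.Adj 0 1) (h12 : H.Adj 1 2) (h23 : H.Adj 2 3)
    {V₁ V₂ : Type} {A₁ : SimpleGraph V₁} {A₂ : SimpleGraph V₂}
    (n1 : ¬ HasInduced H A₁) (n2 : ¬ HasInduced H A₂) :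
    ¬ HasInduced H (sumGraph A₁ A₂) := by
  rintro ⟨f, hfi, hfa⟩
  have hside : ∀ x y, (sumGraph A₁ A₂).Adj x y → x.isLeft = y.isLeft := by
    rintro _ _ (⟨a, b, rfl, rfl, -⟩ | ⟨a, b, rfl, rfl, -⟩) <;> rfl
  have h1s := hside _ _ ((hfa 0 1).mpr h01)
  have h2s := hside _ _ ((hfa 1 2).mpr h12)
  have h3s := hside _ _ ((hfa 2 3).mpr h23)
  have hsame : ∀ i : Fin 4, (f i).isLeft = (f 0).isLeft := by
    intro i; fin_cases i
    exacts [rfl, h1s.symm, (h1s.trans h2s).symm, ((h1s.trans h2s).trans h3s).symm]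
  rcases hf0 : f 0 with a0 | a0
  · have hall : ∀ i : Fin 4, ∃ a, f i = Sum.inl a := by
      intro i
      have h := hsame i
      rw [hf0] at h
      rcases hfi' : f i with a | a
      · exact ⟨a, rfl⟩
      · rw [hfi'] at h; simp at h
    choose g hg using hall
    refine n1 ⟨g, fun i j hij => hfi (by rw [hg, hg, hij]), fun i j => ?_⟩
    rw [← hfa i j]
    constructor
    · intro h; rw [hg i, hg j]; exact Or.inl ⟨_, _, rfl, rfl, h⟩
    · intro h
      rw [hg i, hg j] at h
      rcases h with ⟨a, b, ha, hb, h⟩ | ⟨a, b, ha, hb, h⟩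
      · obtain rfl := Sum.inl.inj ha; obtain rfl := Sum.inl.inj hb; exact h
      · exact absurd ha (by simp)
  · have hall : ∀ i : Fin 4, ∃ a, f i = Sum.inr a := by
      intro i
      have h := hsame i
      rw [hf0] at h
      rcases hfi' : f i with a | a
      · rw [hfi'] at h; simp at h
      · exact ⟨a, rfl⟩
    choose g hg using hall
    refine n2 ⟨g, fun i j hij => hfi (by rw [hg, hg, hij]), fun i j => ?_⟩
    rw [← hfa i j]
    constructor
    · intro h; rw [hg i, hg j]; exact Or.inr ⟨_, _, rfl, rfl, h⟩
    · intro h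
      rw [hg i, hg j] at h
      rcases h with ⟨a, b, ha, hb, h⟩ | ⟨a, b, ha, hb, h⟩
      · exact absurd ha (by simp)
      · obtain rfl := Sum.inr.inj ha; obtain rfl := Sum.inr.inj hb; exact h

lemma not_hasInduced_cone {H : SimpleGraph (Fin 4)}
    (hnu : ∀ k : Fin 4, ∃ j, ¬ H.Adj k j ∧ j ≠ k)
    {V : Type} {A : SimpleGraph V} (nA : ¬ HasInduced H A) :
    ¬ HasInduced H (coneGraph A) := by
  rintro ⟨f, hfi, hfa⟩
  by_cases hn : ∃ k, f k = none
  · obtain ⟨k, hk⟩ := hn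
    obtain ⟨j, hj, hjk⟩ := hnu k
    have hfj : f j ≠ none := fun h => hjk (hfi (h.trans hk.symm))
    exact hj ((hfa k j).mp (by rw [hk]; exact Or.inl ⟨rfl, hfj⟩))
  · push_neg at hn
    have hall : ∀ i, ∃ a, f i = some a := fun i => Option.ne_none_iff_exists'.mp (hn i)
    choose g hg using hall
    refine nA ⟨g, fun i j hij => hfi (by rw [hg, hg, hij]), fun i j => ?_⟩
    rw [← hfa i j, hg i, hg j, coneGraph_adj_some]

lemma pathGraph4_nu : ∀ k : Fin 4, ∃ j, ¬ (SimpleGraph.pathGraph 4).Adj k j ∧ j ≠ k := by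
  simp only [SimpleGraph.pathGraph_adj]; decide

lemma cycleGraph4_nu : ∀ k : Fin 4, ∃ j, ¬ (SimpleGraph.cycleGraph 4).Adj k j ∧ j ≠ k := by
  simp only [SimpleGraph.cycleGraph_adj]; decide

lemma droms_free {V : Type} {A : SimpleGraph V} (h : DromsFam A) :
    ¬ HasInduced (SimpleGraph.pathGraph 4) A ∧
      ¬ HasInduced (SimpleGraph.cycleGraph 4) A := by
  induction h with
  | empty =>
    constructor <;> rintro ⟨f, -, -⟩ <;> exact (f 0).elim
  | union h1 h2 ih1 ih2 =>
    refine ⟨not_hasInduced_sum ?_ ?_ ?_ ih1.1 ih2.1,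
      not_hasInduced_sum ?_ ?_ ?_ ih1.2 ih2.2⟩ <;>
      first
        | (rw [SimpleGraph.pathGraph_adj]; decide)
        | (rw [SimpleGraph.cycleGraph_adj]; decide)
  | cone h ih =>
    exact ⟨not_hasInduced_cone pathGraph4_nu ih.1, not_hasInduced_cone cycleGraph4_nu ih.2⟩
  | iso h he ih =>
    obtain ⟨e⟩ := he
    constructor <;> intro hB
    · exact ih.1 (hasInduced_comp e.symm e.symm.injective
        (fun a b => e.symm.map_adj_iff) hB)
    · exact ih.2 (hasInduced_comp e.symm e.symm.injective
        (fun a b => e.symm.map_adj_iff) hB)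

/-- In a "connected" {P₄,C₄}-free finite graph there is a universal vertex. -/
lemma exists_universal {V : Type} [Fintype V] {A : SimpleGraph V}
    (hP : ¬ HasInduced (SimpleGraph.pathGraph 4) A)
    (hC : ¬ HasInduced (SimpleGraph.cycleGraph 4) A)
    (hconn : ¬ ∃ S : Set V, S.Nonempty ∧ Sᶜ.Nonempty ∧ ∀ a ∈ S, ∀ b ∈ Sᶜ, ¬ A.Adj a b)
    (hne : Nonempty V) :
    ∃ v : V, ∀ u, u ≠ v → A.Adj v u := by
  classical
  obtain ⟨v, -, hv⟩ := Finset.exists_max_image Finset.univ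
    (fun a => (Finset.univ.filter (A.Adj a)).card) ⟨hne.some, Finset.mem_univ _⟩
  refine ⟨v, ?_⟩
  by_contra hcon
  push_neg at hcon
  obtain ⟨u0, hu0ne, hu0⟩ := hcon
  set S : Set V := {a | A.Adj v a ∨ a = v} with hSdef
  have hu0S : u0 ∈ Sᶜ := by rintro (h | h); exact hu0 h; exact hu0ne h
  have hcross : ¬ ∀ a ∈ S, ∀ b ∈ Sᶜ, ¬ A.Adj a b := fun hall =>
    hconn ⟨S, ⟨v, Or.inr rfl⟩, ⟨u0, hu0S⟩, hall⟩
  push_neg at hcross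
  obtain ⟨w, hwS, u, huS, hwu⟩ := hcross
  have hu : ¬ A.Adj v u ∧ u ≠ v := by
    constructor
    · intro h; exact huS (Or.inl h)
    · intro h; exact huS (Or.inr h)
  have hvw : A.Adj v w := by
    rcases hwS with h | rfl
    · exact h
    · exact absurd hwu hu.1
  -- counting argument
  set Nv := Finset.univ.filter (A.Adj v) with hNv
  set Nw := Finset.univ.filter (A.Adj w) with hNw
  have hle : Nw.card ≤ Nv.card := hv w (Finset.mem_univ w)
  have huv : u ≠ v := hu.2
  have hsub : {u, v} ⊆ Nw \ Nv := by
    intro x hx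
    rcases Finset.mem_insert.mp hx with rfl | hx
    · simp only [hNw, hNv, Finset.mem_sdiff, Finset.mem_filter, Finset.mem_univ, true_and]
      exact ⟨hwu, hu.1⟩
    · rw [Finset.mem_singleton.mp hx]
      simp only [hNw, hNv, Finset.mem_sdiff, Finset.mem_filter, Finset.mem_univ, true_and]
      exact ⟨hvw.symm, A.irrefl⟩
  have h2 : 2 ≤ (Nw \ Nv).card := by
    have := Finset.card_le_card hsub
    rwa [Finset.card_insert_of_notMem (by simp [huv]), Finset.card_singleton] at this
  have he1 : (Nv \ Nw).card + (Nv ∩ Nw).card = Nv.card :=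
    Finset.card_sdiff_add_card_inter Nv Nw
  have he2 : (Nw \ Nv).card + (Nw ∩ Nv).card = Nw.card :=
    Finset.card_sdiff_add_card_inter Nw Nv
  have hint : (Nv ∩ Nw).card = (Nw ∩ Nv).card := by rw [Finset.inter_comm]
  have h2' : 1 < (Nv \ Nw).card := by omega
  obtain ⟨x, hxmem, hxw⟩ := Finset.exists_mem_ne h2' w
  have hvx : A.Adj v x := (Finset.mem_filter.mp (Finset.mem_sdiff.mp hxmem).1).2
  have hwx : ¬ A.Adj w x := fun h =>
    (Finset.mem_sdiff.mp hxmem).2 (Finset.mem_filter.mpr ⟨Finset.mem_univ x, h⟩)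
  have hux : u ≠ x := fun h => hu.1 (h ▸ hvx)
  have hvx' : v ≠ x := fun h => A.irrefl (h ▸ hvx)
  have huw : u ≠ w := A.ne_of_adj hwu.symm
  have hwv : w ≠ v := A.ne_of_adj hvw.symm
  -- the four vertices u, w, v, x form an induced P₄ or C₄
  have hA1 : A.Adj u w := hwu.symm
  have hA2 : A.Adj w v := hvw.symm
  have hA3 : A.Adj v x := hvx
  have hn1 : ¬ A.Adj u v := fun h => hu.1 h.symm
  have hn2 : ¬ A.Adj w x := hwx
  have hir : ∀ y : V, ¬ A.Adj y y := fun y => A.irrefl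
  have hinj : Function.Injective ![u, w, v, x] := by
    intro i j hij
    fin_cases i <;> fin_cases j <;>
      first
        | rfl
        | (exfalso; revert hij;
           simp only [Fin.zero_eta, Fin.mk_one, show ((⟨2, by omega⟩ : Fin 4)) = 2 from rfl,
             show ((⟨3, by omega⟩ : Fin 4)) = 3 from rfl,
             Matrix.cons_val_zero, Matrix.cons_val_one, Matrix.head_cons,
             Matrix.cons_val_two, Matrix.tail_cons, Matrix.cons_val_three];
           intro hij;
           first | exact huw hij | exact huw hij.symm | exact huv hij | exact huv hij.symm | exact hux hij | exact hux hij.symm | exact hwv hij | exact hwv hij.symm | exact hxw hij.symm | exact hxw hij | exact hvx' hij | exact hvx' hij.symm)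
  by_cases hux2 : A.Adj u x
  · refine hC ⟨![u, w, v, x], hinj, fun i j => ?_⟩
    fin_cases i <;> fin_cases j <;>
      simp only [Fin.zero_eta, Fin.mk_one, show ((⟨2, by omega⟩ : Fin 4)) = 2 from rfl,
        show ((⟨3, by omega⟩ : Fin 4)) = 3 from rfl,
        Matrix.cons_val_zero, Matrix.cons_val_one, Matrix.head_cons,
        Matrix.cons_val_two, Matrix.tail_cons, Matrix.cons_val_three] <;>
      first
        | (refine iff_of_true ?_ (by simp only [SimpleGraph.cycleGraph_adj]; decide); first | exact hA1 | exact hA1.symm | exact hA2 | exact hA2.symm | exact hA3 | exact hA3.symm | exact hux2 | exact hux2.symm)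
        | (refine iff_of_false ?_ (by simp only [SimpleGraph.cycleGraph_adj]; decide); first | exact hir _ | exact hn1 | exact (fun h => hn1 h.symm) | exact hn2 | exact (fun h => hn2 h.symm))
  · refine hP ⟨![u, w, v, x], hinj, fun i j => ?_⟩
    fin_cases i <;> fin_cases j <;>
      simp only [Fin.zero_eta, Fin.mk_one, show ((⟨2, by omega⟩ : Fin 4)) = 2 from rfl,
        show ((⟨3, by omega⟩ : Fin 4)) = 3 from rfl,
        Matrix.cons_val_zero, Matrix.cons_val_one, Matrix.head_cons,
        Matrix.cons_val_two, Matrix.tail_cons, Matrix.cons_val_three] <;>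
      first
        | (refine iff_of_true ?_ (by simp only [SimpleGraph.pathGraph_adj]; decide); first | exact hA1 | exact hA1.symm | exact hA2 | exact hA2.symm | exact hA3 | exact hA3.symm)
        | (refine iff_of_false ?_ (by simp only [SimpleGraph.pathGraph_adj]; decide); first | exact hir _ | exact hn1 | exact (fun h => hn1 h.symm) | exact hn2 | exact (fun h => hn2 h.symm) | exact hux2 | exact (fun h => hux2 h.symm))

lemma free_to_droms : ∀ (n : ℕ) {V : Type} [Fintype V] (A : SimpleGraph V),
    Fintype.card V = n →
    ¬ HasInduced (SimpleGraph.pathGraph 4) A →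
    ¬ HasInduced (SimpleGraph.cycleGraph 4) A →
    DromsFam A := by
  intro n
  induction n using Nat.strong_induction_on with
  | _ n ih =>
    intro V _ A hcard hP hC
    classical
    rcases Nat.eq_zero_or_pos n with rfl | hpos
    · have hemp : IsEmpty V := Fintype.card_eq_zero_iff.mp hcard
      refine DromsFam.iso DromsFam.empty ⟨⟨Equiv.equivOfIsEmpty Empty V, ?_⟩⟩
      intro a b; exact a.elim
    by_cases hdis : ∃ S : Set V, S.Nonempty ∧ Sᶜ.Nonempty ∧ ∀ a ∈ S, ∀ b ∈ Sᶜ, ¬ A.Adj a b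
    · obtain ⟨S, ⟨s0, hs0⟩, ⟨t0, ht0⟩, hsep⟩ := hdis
      set A₁ : SimpleGraph {a // a ∈ S} := A.comap Subtype.val with hA1
      set A₂ : SimpleGraph {a // a ∉ S} := A.comap Subtype.val with hA2
      have hP1 : ¬ HasInduced (SimpleGraph.pathGraph 4) A₁ := fun h =>
        hP (hasInduced_comp Subtype.val Subtype.val_injective (fun a b => Iff.rfl) h)
      have hC1 : ¬ HasInduced (SimpleGraph.cycleGraph 4) A₁ := fun h =>
        hC (hasInduced_comp Subtype.val Subtype.val_injective (fun a b => Iff.rfl) h)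
      have hP2 : ¬ HasInduced (SimpleGraph.pathGraph 4) A₂ := fun h =>
        hP (hasInduced_comp Subtype.val Subtype.val_injective (fun a b => Iff.rfl) h)
      have hC2 : ¬ HasInduced (SimpleGraph.cycleGraph 4) A₂ := fun h =>
        hC (hasInduced_comp Subtype.val Subtype.val_injective (fun a b => Iff.rfl) h)
      have hc1 : Fintype.card {a // a ∈ S} < n := hcard ▸ Fintype.card_subtype_lt (x := t0) ht0
      have hc2 : Fintype.card {a // a ∉ S} < n :=
        hcard ▸ Fintype.card_subtype_lt (x := s0) (by simpa using hs0)
      have d1 : DromsFam A₁ := ih _ hc1 A₁ rfl hP1 hC1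
      have d2 : DromsFam A₂ := ih _ hc2 A₂ rfl hP2 hC2
      refine DromsFam.iso (DromsFam.union d1 d2) ⟨⟨Equiv.sumCompl (· ∈ S), ?_⟩⟩
      rintro (a | a) (b | b)
      · exact Iff.symm sumGraph_adj_inl
      · refine iff_of_false (hsep _ a.2 _ b.2) ?_
        rintro (⟨_, _, -, h, -⟩ | ⟨_, _, h, -, -⟩) <;> simp at h
      · refine iff_of_false (fun h => hsep _ b.2 _ a.2 h.symm) ?_
        rintro (⟨_, _, h, -, -⟩ | ⟨_, _, -, h, -⟩) <;> simp at h
      · exact Iff.symm sumGraph_adj_inr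
    · have hne : Nonempty V := Fintype.card_pos_iff.mp (hcard ▸ hpos)
      obtain ⟨v, hv⟩ := exists_universal hP hC hdis hne
      set B : SimpleGraph {u // u ≠ v} := A.comap Subtype.val with hB
      have hPB : ¬ HasInduced (SimpleGraph.pathGraph 4) B := fun h =>
        hP (hasInduced_comp Subtype.val Subtype.val_injective (fun a b => Iff.rfl) h)
      have hCB : ¬ HasInduced (SimpleGraph.cycleGraph 4) B := fun h =>
        hC (hasInduced_comp Subtype.val Subtype.val_injective (fun a b => Iff.rfl) h)
      have hcB : Fintype.card {u // u ≠ v} < n :=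
        hcard ▸ Fintype.card_subtype_lt (x := v) (by simp)
      have dB : DromsFam B := ih _ hcB B rfl hPB hCB
      refine DromsFam.iso (DromsFam.cone dB) ⟨⟨Equiv.optionSubtypeNe v, ?_⟩⟩
      rintro (_ | a) (_ | b)
      · refine iff_of_false A.irrefl ?_
        rintro (⟨-, h⟩ | ⟨h, -⟩ | ⟨_, _, h, -, -⟩) <;> simp at h
      · exact iff_of_true (hv b.1 b.2) (Or.inl ⟨rfl, by simp⟩)
      · exact iff_of_true (A.adj_symm (hv a.1 a.2)) (Or.inr (Or.inl ⟨by simp, rfl⟩))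
      · exact Iff.symm coneGraph_adj_some

end Aux

/-- A finite simple graph is `{P₄, C₄}`-free (a Droms graph) if and only if it belongs
to the smallest family of graphs containing the empty graph and closed under disjoint
unions and cones. -/
theorem stmt17 {V : Type} [Fintype V] (A : SimpleGraph V) :
    (¬ HasInduced (SimpleGraph.pathGraph 4) A ∧
      ¬ HasInduced (SimpleGraph.cycleGraph 4) A) ↔ DromsFam A := by
  constructor
  · rintro ⟨hP, hC⟩
    exact free_to_droms (Fintype.card V) A rfl hP hC
  · exact droms_free
end
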